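/- Let s > 0 and 0 < q < 1 be real numbers, let a : ℕ → ℝ satisfy a(j) > 0 and a(j+1) ≤ q·a(j) for all j ∈ ℕ, let K ≥ 0 be real, let ℓ ∈ ℕ, and let N ≥ 0 be a real number with N ≤ K·∑_{j=0}^{ℓ−1} a(j)^{−1/s}. Then N^s · a(ℓ) ≤ K^s · (1 − q^{1/s})^{−s}. (This is the counting core of the paper's optimal-convergence theorem: combining the mesh-closure bound on the cumulative number of marked vertices with error contraction yields the optimal algebraic rate.) -/

import Mathlib

/-- Counting core of the optimal-convergence theorem. -/
theorem stmt_2 (s q : ℝ) (hs : 0 < s) (hq0 : 0 < q) (hq1 : q < 1)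
    (a : ℕ → ℝ) (ha : ∀ j, 0 < a j) (hcontr : ∀ j, a (j + 1) ≤ q * a j)
    (K : ℝ) (hK : 0 ≤ K) (ℓ : ℕ) (N : ℝ) (hN0 : 0 ≤ N)
    (hN : N ≤ K * ∑ j ∈ Finset.range ℓ, a j ^ (-(1 / s))) :
    N ^ s * a ℓ ≤ K ^ s * (1 - q ^ (1 / s)) ^ (-s) := by
  set r : ℝ := q ^ (1 / s) with hrdef
  have hs' : 0 < 1 / s := by positivity
  have hr0 : 0 < r := Real.rpow_pos_of_pos hq0 _
  have hr1 : r < 1 := Real.rpow_lt_one hq0.le hq1 hs'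
  have h1r : 0 < 1 - r := by linarith
  -- contraction over k steps
  have key : ∀ k j, a (j + k) ≤ q ^ k * a j := by
    intro k
    induction k with
    | zero => intro j; simp
    | succ n ih =>
      intro j
      calc a (j + (n + 1)) = a ((j + n) + 1) := by ring_nf
        _ ≤ q * a (j + n) := hcontr _
        _ ≤ q * (q ^ n * a j) := mul_le_mul_of_nonneg_left (ih j) hq0.le
        _ = q ^ (n + 1) * a j := by ring
  -- (q^k)^(1/s) = r^k
  have hqk : ∀ k : ℕ, ((q : ℝ) ^ k) ^ (1 / s) = r ^ k := by
    intro k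
    rw [← Real.rpow_natCast q k, ← Real.rpow_mul hq0.le, mul_comm,
      Real.rpow_mul hq0.le, Real.rpow_natCast]
  -- termwise bound
  have hterm : ∀ j ∈ Finset.range ℓ, a j ^ (-(1 / s)) ≤ r ^ (ℓ - j) * a ℓ ^ (-(1 / s)) := by
    intro j hj
    have hjℓ : j ≤ ℓ := le_of_lt (Finset.mem_range.mp hj)
    have h2 : a ℓ ≤ q ^ (ℓ - j) * a j := by
      have := key (ℓ - j) j
      rwa [Nat.add_sub_cancel' hjℓ] at this
    have h3 : a ℓ ^ (1 / s) ≤ r ^ (ℓ - j) * a j ^ (1 / s) := by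
      calc a ℓ ^ (1 / s) ≤ (q ^ (ℓ - j) * a j) ^ (1 / s) :=
            Real.rpow_le_rpow (ha ℓ).le h2 hs'.le
        _ = r ^ (ℓ - j) * a j ^ (1 / s) := by
            rw [Real.mul_rpow (by positivity) (ha j).le, hqk]
    have hA : 0 < a ℓ ^ (1 / s) := Real.rpow_pos_of_pos (ha ℓ) _
    have hB : 0 < a j ^ (1 / s) := Real.rpow_pos_of_pos (ha j) _
    rw [Real.rpow_neg (ha j).le, Real.rpow_neg (ha ℓ).le]
    have h4 := mul_le_mul_of_nonneg_left h3
      (show (0:ℝ) ≤ (a ℓ ^ (1 / s))⁻¹ * (a j ^ (1 / s))⁻¹ by positivity)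
    calc (a j ^ (1 / s))⁻¹
        = (a ℓ ^ (1 / s))⁻¹ * (a j ^ (1 / s))⁻¹ * a ℓ ^ (1 / s) := by
          field_simp
      _ ≤ (a ℓ ^ (1 / s))⁻¹ * (a j ^ (1 / s))⁻¹ * (r ^ (ℓ - j) * a j ^ (1 / s)) := h4
      _ = r ^ (ℓ - j) * (a ℓ ^ (1 / s))⁻¹ := by
          field_simp
  -- geometric sum bound
  have geom : ∀ n : ℕ, ∑ j ∈ Finset.range n, r ^ (n - j) ≤ r / (1 - r) := by
    intro n
    induction n with
    | zero => simp; positivity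
    | succ m ih =>
      rw [Finset.sum_range_succ]
      have hsum : ∑ j ∈ Finset.range m, r ^ (m + 1 - j)
          = (∑ j ∈ Finset.range m, r ^ (m - j)) * r := by
        rw [Finset.sum_mul]
        apply Finset.sum_congr rfl
        intro j hj
        have hjm : j < m := Finset.mem_range.mp hj
        have : m + 1 - j = (m - j) + 1 := by omega
        rw [this, pow_succ]
      have hlast : m + 1 - m = 1 := by omega
      rw [hsum, hlast, pow_one]
      have : (∑ j ∈ Finset.range m, r ^ (m - j)) * r ≤ (r / (1 - r)) * r :=
        mul_le_mul_of_nonneg_right ih hr0.le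
      have heq : (r / (1 - r)) * r + r = r / (1 - r) := by
        field_simp; ring
      linarith
  -- sum bound
  have hsumb : ∑ j ∈ Finset.range ℓ, a j ^ (-(1 / s)) ≤ a ℓ ^ (-(1 / s)) * (1 - r)⁻¹ := by
    calc ∑ j ∈ Finset.range ℓ, a j ^ (-(1 / s))
        ≤ ∑ j ∈ Finset.range ℓ, r ^ (ℓ - j) * a ℓ ^ (-(1 / s)) :=
          Finset.sum_le_sum hterm
      _ = (∑ j ∈ Finset.range ℓ, r ^ (ℓ - j)) * a ℓ ^ (-(1 / s)) := by
          rw [Finset.sum_mul]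
      _ ≤ (r / (1 - r)) * a ℓ ^ (-(1 / s)) := by
          exact mul_le_mul_of_nonneg_right (geom ℓ)
            (Real.rpow_pos_of_pos (ha ℓ) _).le
      _ ≤ (1 / (1 - r)) * a ℓ ^ (-(1 / s)) := by
          apply mul_le_mul_of_nonneg_right _ (Real.rpow_pos_of_pos (ha ℓ) _).le
          gcongr
      _ = a ℓ ^ (-(1 / s)) * (1 - r)⁻¹ := by rw [one_div]; ring
  -- final
  have hNle : N ≤ K * (a ℓ ^ (-(1 / s)) * (1 - r)⁻¹) :=
    le_trans hN (mul_le_mul_of_nonneg_left hsumb hK)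
  have hNs : N ^ s ≤ (K * (a ℓ ^ (-(1 / s)) * (1 - r)⁻¹)) ^ s :=
    Real.rpow_le_rpow hN0 hNle hs.le
  have e1 : (a ℓ ^ (-(1 / s))) ^ s = (a ℓ)⁻¹ := by
    rw [← Real.rpow_mul (ha ℓ).le]
    have : -(1 / s) * s = -1 := by field_simp
    rw [this, Real.rpow_neg_one]
  have e2 : ((1 - r)⁻¹) ^ s = (1 - r) ^ (-s) := by
    rw [Real.inv_rpow h1r.le, ← Real.rpow_neg h1r.le]
  have hexp : (K * (a ℓ ^ (-(1 / s)) * (1 - r)⁻¹)) ^ s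
      = K ^ s * ((a ℓ)⁻¹ * (1 - r) ^ (-s)) := by
    rw [Real.mul_rpow hK (mul_nonneg (Real.rpow_pos_of_pos (ha ℓ) _).le (by positivity)),
      Real.mul_rpow (Real.rpow_pos_of_pos (ha ℓ) _).le (by positivity), e1, e2]
  calc N ^ s * a ℓ ≤ (K * (a ℓ ^ (-(1 / s)) * (1 - r)⁻¹)) ^ s * a ℓ :=
        mul_le_mul_of_nonneg_right hNs (ha ℓ).le
    _ = K ^ s * (1 - r) ^ (-s) := by
        rw [hexp]
        field_simp
        exact mul_div_cancel_right₀ _ (ha ℓ).ne'
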